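/- For every 0 < κ < 1 and every u > 0 one has the identity c₁(κ)·K_{(κ−1)/2}(u)·u^{(κ−1)/2} = c₂(κ)·(1 − θ_κ(u))·u^{κ−1}. (Representation (9) of Lemma 1: the Matérn-type spectral factor written through the function θ_κ.) -/

import Mathlib

open Real MeasureTheory Filter

noncomputable def c1 (k : ℝ) : ℝ := (2:ℝ) ^ ((1 - k)/2) / (Real.sqrt π * Real.Gamma (k/2))

noncomputable def c2 (k : ℝ) : ℝ := 1 / (2 * Real.Gamma k * Real.cos (k * π / 2))

/-- Modified Bessel function of the second kind:
`K ν z = (1/2) ∫₀^∞ s^(ν−1) exp(−(z/2)(s + 1/s)) ds`. -/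
noncomputable def besselK (ν z : ℝ) : ℝ :=
  (1/2) * ∫ s in Set.Ioi (0:ℝ), s ^ (ν - 1) * Real.exp (-(z/2) * (s + 1/s))

/-- The function `θ_κ(u)` from Lemma 1. -/
noncomputable def theta (k u : ℝ) : ℝ :=
  Real.Gamma ((k+1)/2) *
    ((2:ℝ)^(k-1) * u^(1-k) / Real.Gamma ((3-k)/2)
      + ∑' m : ℕ, (u/2) ^ (2*((m:ℝ)+1) - k + 1) /
          ((Nat.factorial (m+1)) * Real.Gamma (((m:ℝ)+1) + (3-k)/2))
      - ∑' m : ℕ, (u/2) ^ (2*((m:ℝ)+1)) /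
          ((Nat.factorial (m+1)) * Real.Gamma (((m:ℝ)+1) + (k+1)/2)))

open Set

namespace Lemma1Aux




/-- auxiliary integral `F μ x = ∫_0^∞ t^(μ-1) exp(-t - x/t) dt` (with `x ⊔ 0` for monotonicity) -/
noncomputable def F (μ x : ℝ) : ℝ :=
  ∫ t in Set.Ioi (0:ℝ), t ^ (μ - 1) * Real.exp (-t - (x ⊔ 0) / t)

lemma pow_div_fact_le_exp {y : ℝ} (hy : 0 ≤ y) (n : ℕ) : y ^ n / n.factorial ≤ Real.exp y := by
  have h := Real.sum_le_exp_of_nonneg hy (n+1)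
  refine le_trans ?_ h
  have : y ^ n / n.factorial = ∑ i ∈ Finset.range (n+1), if i = n then y ^ i / i.factorial else 0 := by
    simp
  rw [this]
  exact Finset.sum_le_sum (by
    intro i hi
    split
    · simp
    · positivity)

lemma exp_neg_le {y : ℝ} (hy : 0 < y) (n : ℕ) : Real.exp (-y) ≤ n.factorial / y ^ n := by
  rw [Real.exp_neg]
  rw [inv_le_iff_one_le_mul₀ (Real.exp_pos y)]
  have h := pow_div_fact_le_exp hy.le n
  rw [div_le_iff₀ (by positivity : (0:ℝ) < (n.factorial : ℝ))] at h
  rw [div_mul_eq_mul_div, le_div_iff₀ (by positivity : (0:ℝ) < y ^ n)]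
  nlinarith [Real.exp_pos y]

lemma measurable_kernel (μ x : ℝ) : Measurable (fun t : ℝ => t ^ (μ - 1) * Real.exp (-t - x / t)) := by
  fun_prop

lemma integrableOn_kernel {μ x : ℝ} (h : 0 < x ∨ 0 < μ) (hx : 0 ≤ x) :
    IntegrableOn (fun t : ℝ => t ^ (μ - 1) * Real.exp (-t - x / t)) (Set.Ioi 0) := by
  have meas := measurable_kernel μ x
  have key1 : IntegrableOn (fun t : ℝ => t ^ (μ - 1) * Real.exp (-t - x / t)) (Set.Ioc 0 1) := by
    rcases h with hx0 | hμ0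
    · -- x > 0 : bounded near 0
      set N : ℕ := ⌈1 - μ⌉₊ with hN
      refine Integrable.mono' (integrable_const ((N.factorial : ℝ) / x ^ N))
        meas.aestronglyMeasurable ?_
      rw [ae_restrict_iff' measurableSet_Ioc]
      refine ae_of_all _ (fun t ht => ?_)
      obtain ⟨ht0, ht1⟩ := ht
      have hfnn : 0 ≤ t ^ (μ - 1) * Real.exp (-t - x / t) := by positivity
      rw [Real.norm_eq_abs, abs_of_nonneg hfnn]
      have h1 : t ^ (μ - 1) ≤ t ^ (-(N:ℝ)) := by
        apply Real.rpow_le_rpow_of_exponent_ge ht0 ht1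
        have : (1 - μ) ≤ (N : ℝ) := Nat.le_ceil _
        linarith
      have h2 : Real.exp (-t - x / t) ≤ (N.factorial : ℝ) / (x / t) ^ N := by
        have : Real.exp (-t - x/t) ≤ Real.exp (-(x/t)) := by
          apply Real.exp_le_exp.mpr; nlinarith
        exact this.trans (exp_neg_le (by positivity) N)
      calc t ^ (μ - 1) * Real.exp (-t - x / t)
          ≤ t ^ (-(N:ℝ)) * ((N.factorial : ℝ) / (x / t) ^ N) := by
            apply mul_le_mul h1 h2 (Real.exp_pos _).le (Real.rpow_nonneg ht0.le _)
        _ = (N.factorial : ℝ) / x ^ N * (t ^ (-(N:ℝ)) * t ^ (N:ℝ)) := by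
            rw [div_pow, Real.rpow_natCast]
            field_simp
        _ = (N.factorial : ℝ) / x ^ N := by
            rw [← Real.rpow_add ht0]; simp
    · -- μ > 0 : dominated by Gamma integrand
      refine Integrable.mono' ((Real.GammaIntegral_convergent hμ0).mono_set Set.Ioc_subset_Ioi_self)
        meas.aestronglyMeasurable ?_
      rw [ae_restrict_iff' measurableSet_Ioc]
      refine ae_of_all _ (fun t ht => ?_)
      obtain ⟨ht0, _⟩ := ht
      have hfnn : 0 ≤ t ^ (μ - 1) * Real.exp (-t - x / t) := by positivity
      rw [Real.norm_eq_abs, abs_of_nonneg hfnn, mul_comm]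
      apply mul_le_mul_of_nonneg_right _ (Real.rpow_nonneg ht0.le _)
      apply Real.exp_le_exp.mpr
      have : 0 ≤ x / t := by positivity
      linarith
  have key2 : IntegrableOn (fun t : ℝ => t ^ (μ - 1) * Real.exp (-t - x / t)) (Set.Ioi 1) := by
    set μ' : ℝ := max μ 1 with hμ'
    refine Integrable.mono' (((Real.GammaIntegral_convergent (show (0:ℝ) < μ' by positivity)).mono_set
      (Set.Ioi_subset_Ioi zero_le_one))) meas.aestronglyMeasurable ?_
    rw [ae_restrict_iff' measurableSet_Ioi]
    refine ae_of_all _ (fun t ht => ?_)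
    have ht1 : (1:ℝ) < t := ht
    have ht0 : (0:ℝ) < t := lt_trans one_pos ht1
    have hfnn : 0 ≤ t ^ (μ - 1) * Real.exp (-t - x / t) := by positivity
    rw [Real.norm_eq_abs, abs_of_nonneg hfnn, mul_comm]
    apply mul_le_mul
    · apply Real.exp_le_exp.mpr
      have : 0 ≤ x / t := by positivity
      linarith
    · exact Real.rpow_le_rpow_of_exponent_le ht1.le (by simp [hμ'])
    · exact Real.rpow_nonneg ht0.le _
    · exact (Real.exp_pos _).le
  have : Set.Ioc (0:ℝ) 1 ∪ Set.Ioi 1 = Set.Ioi 0 := Set.Ioc_union_Ioi_eq_Ioi zero_le_one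
  rw [← this]
  exact key1.union key2





lemma F_of_nonneg {μ x : ℝ} (hx : 0 ≤ x) :
    F μ x = ∫ t in Set.Ioi (0:ℝ), t ^ (μ - 1) * Real.exp (-t - x / t) := by
  rw [F, max_eq_left hx]

lemma F_zero {μ : ℝ} (hμ : 0 < μ) : F μ 0 = Real.Gamma μ := by
  rw [F_of_nonneg le_rfl, Real.Gamma_eq_integral hμ]
  refine setIntegral_congr_fun measurableSet_Ioi (fun t ht => ?_)
  rw [zero_div, sub_zero, mul_comm]

lemma F_nonneg (μ x : ℝ) : 0 ≤ F μ x := by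
  apply setIntegral_nonneg measurableSet_Ioi
  intro t ht
  have : (0:ℝ) < t := ht
  positivity

lemma F_antitone {μ : ℝ} (hμ : 0 < μ) : Antitone (F μ) := by
  intro x y hxy
  rw [F, F]
  have hx : (0:ℝ) ≤ x ⊔ 0 := le_max_right _ _
  have hy : (0:ℝ) ≤ y ⊔ 0 := le_max_right _ _
  refine setIntegral_mono_on (integrableOn_kernel (Or.inr hμ) hy)
    (integrableOn_kernel (Or.inr hμ) hx) measurableSet_Ioi (fun t ht => ?_)
  have ht0 : (0:ℝ) < t := ht
  have h1 : Real.exp (-t - (y ⊔ 0)/t) ≤ Real.exp (-t - (x ⊔ 0)/t) := by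
    apply Real.exp_le_exp.mpr
    have hs : (x ⊔ 0) ≤ (y ⊔ 0) := sup_le_sup_right hxy 0
    have : (x ⊔ 0)/t ≤ (y ⊔ 0)/t := by gcongr
    linarith
  exact mul_le_mul_of_nonneg_left h1 (Real.rpow_nonneg ht0.le _)

lemma F_measurable {μ : ℝ} (hμ : 0 < μ) : Measurable (F μ) := (F_antitone hμ).measurable

lemma F_le_Gamma {μ : ℝ} (hμ : 0 < μ) (x : ℝ) : F μ x ≤ Real.Gamma μ := by
  have h1 : F μ x = F μ (x ⊔ 0) := by rw [F, F, max_assoc, max_self]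
  rw [h1, ← F_zero hμ]
  exact F_antitone hμ (le_max_right x 0)

lemma F_funEq {a x : ℝ} (hx : 0 < x) : F a x = x ^ a * F (-a) x := by
  have hxs : x ⊔ 0 = x := max_eq_left hx.le
  have step1 : F a x = ∫ t in Ioi (0:ℝ), x ^ (a+1) *
      ((x*t) ^ (-a - 1) * Real.exp (-(x*t) - x / (x*t))) := by
    rw [F, hxs,
      ← integral_comp_rpow_Ioi (fun s => s ^ (a - 1) * Real.exp (-s - x / s)) (p := -1)
        (by norm_num)]
    refine setIntegral_congr_fun measurableSet_Ioi (fun t ht => ?_)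
    have ht0 : (0:ℝ) < t := ht
    have hxt0 : (0:ℝ) < x * t := by positivity
    rw [smul_eq_mul, Real.rpow_neg_one]
    have h2 : x / t⁻¹ = x * t := by field_simp
    have h3 : (t⁻¹) ^ (a - 1) = t ^ (1 - a) := by
      rw [Real.inv_rpow ht0.le, ← Real.rpow_neg ht0.le]; norm_num
    have h4 : (x * t) ^ (-a - 1) = x ^ (-a - 1) * t ^ (-a - 1) := Real.mul_rpow hx.le ht0.le
    have h5 : x / (x * t) = t⁻¹ := by field_simp
    have h6 : -t⁻¹ - x * t = -(x * t) - t⁻¹ := by ring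
    rw [h2, h3, h4, h5, h6]
    have h7 : x ^ (a + 1) * (x ^ (-a - 1) * t ^ (-a - 1) * Real.exp (-(x * t) - t⁻¹))
        = (x ^ (a+1) * x ^ (-a-1)) * (t ^ (-a-1) * Real.exp (-(x * t) - t⁻¹)) := by ring
    rw [h7, ← Real.rpow_add hx, show a + 1 + (-a - 1) = (0:ℝ) by ring, Real.rpow_zero, one_mul]
    rw [show |(-1:ℝ)| = 1 from by norm_num, one_mul]
    rw [← mul_assoc, ← Real.rpow_add ht0, show (-1 - 1 + (1 - a) : ℝ) = -a - 1 by ring]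
  have step2 : (∫ t in Ioi (0:ℝ), (fun r => r ^ (-a - 1) * Real.exp (-r - x / r)) (x * t))
      = x⁻¹ • ∫ r in Ioi (0:ℝ), r ^ (-a - 1) * Real.exp (-r - x / r) := by
    simpa using integral_comp_mul_left_Ioi (fun r => r ^ (-a - 1) * Real.exp (-r - x / r)) 0 hx
  rw [step1, MeasureTheory.integral_const_mul, step2, smul_eq_mul, F_of_nonneg hx.le]
  rw [← mul_assoc, Real.rpow_add_one hx.ne']
  field_simp






lemma besselK_F {ν u : ℝ} (hu : 0 < u) :
    besselK ν u = (1/2) * (u/2) ^ ν * F (-ν) (u^2/4) := by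
  have hb : (0:ℝ) < 2/u := by positivity
  have hx4 : (0:ℝ) < u^2/4 := by positivity
  have step0 : (∫ t in Ioi (0:ℝ),
        (fun s => s ^ (ν - 1) * Real.exp (-(u/2) * (s + 1/s))) ((2/u) * t))
      = (2/u)⁻¹ • ∫ s in Ioi (0:ℝ), s ^ (ν - 1) * Real.exp (-(u/2) * (s + 1/s)) := by
    simpa using integral_comp_mul_left_Ioi
      (fun s => s ^ (ν - 1) * Real.exp (-(u/2) * (s + 1/s))) 0 hb
  have step1 : (∫ t in Ioi (0:ℝ),
        (fun s => s ^ (ν - 1) * Real.exp (-(u/2) * (s + 1/s))) ((2/u) * t))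
      = (2/u) ^ (ν - 1) * F ν (u^2/4) := by
    rw [F_of_nonneg hx4.le, ← MeasureTheory.integral_const_mul]
    refine setIntegral_congr_fun measurableSet_Ioi (fun t ht => ?_)
    have ht0 : (0:ℝ) < t := ht
    simp only
    rw [Real.mul_rpow hb.le ht0.le]
    have he : -(u/2) * ((2/u) * t + 1/((2/u) * t)) = -t - (u^2/4) / t := by
      field_simp
      ring
    rw [he]
    ring
  have hiv : (∫ s in Ioi (0:ℝ), s ^ (ν - 1) * Real.exp (-(u/2) * (s + 1/s)))
      = (2/u) ^ ν * F ν (u^2/4) := by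
    have := step0.symm.trans step1
    rw [smul_eq_mul] at this
    have h2 : (2/u) * ((2/u)⁻¹ * (∫ s in Ioi (0:ℝ), s ^ (ν - 1) * Real.exp (-(u/2) * (s + 1/s))))
        = (2/u) * ((2/u) ^ (ν - 1) * F ν (u^2/4)) := by rw [this]
    rw [← mul_assoc, mul_inv_cancel₀ hb.ne', one_mul] at h2
    rw [h2, ← mul_assoc, mul_comm (2/u : ℝ), ← Real.rpow_add_one hb.ne',
      show ν - 1 + 1 = ν by ring]
  rw [besselK, hiv, F_funEq hx4]
  have hpow : (2/u) ^ ν * (u^2/4) ^ ν = (u/2) ^ ν := by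
    rw [← Real.mul_rpow hb.le hx4.le]
    congr 1
    field_simp
    ring
  rw [← hpow]
  ring




noncomputable def T (a x : ℝ) : ℝ :=
  ∑' m : ℕ, (x ⊔ 0) ^ m / (m.factorial * Real.Gamma ((m:ℝ) + 1 + a))

lemma Gamma_term_pos {a : ℝ} (ha : -1 < a) (m : ℕ) : 0 < Real.Gamma ((m:ℝ) + 1 + a) := by
  apply Real.Gamma_pos_of_pos
  have : (0:ℝ) ≤ m := Nat.cast_nonneg m
  linarith

lemma term_nonneg {a : ℝ} (ha : -1 < a) (x : ℝ) (m : ℕ) :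
    0 ≤ (x ⊔ 0) ^ m / (m.factorial * Real.Gamma ((m:ℝ) + 1 + a)) := by
  have h1 := Gamma_term_pos ha m
  have h2 : (0:ℝ) ≤ x ⊔ 0 := le_max_right _ _
  positivity

lemma T_summable {a : ℝ} (ha : -1 < a) (x : ℝ) :
    Summable (fun m : ℕ => (x ⊔ 0) ^ m / (m.factorial * Real.Gamma ((m:ℝ) + 1 + a))) := by
  set y := x ⊔ 0 with hy
  have hy0 : 0 ≤ y := le_max_right _ _
  apply summable_of_ratio_norm_eventually_le (r := 1/2) (by norm_num)
  filter_upwards [Filter.eventually_ge_atTop (max 1 ⌈2*y⌉₊)] with m hm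
  have hm1 : 1 ≤ m := le_trans (le_max_left _ _) hm
  have hm2 : (⌈2*y⌉₊ : ℕ) ≤ m := le_trans (le_max_right _ _) hm
  have hG1 := Gamma_term_pos ha m
  have hG2 := Gamma_term_pos ha (m+1)
  have hfact : (0:ℝ) < m.factorial := by positivity
  have hrec : Real.Gamma ((m+1:ℕ) + 1 + a) = ((m:ℝ) + 1 + a) * Real.Gamma ((m:ℝ) + 1 + a) := by
    have : ((m+1:ℕ):ℝ) + 1 + a = ((m:ℝ) + 1 + a) + 1 := by push_cast; ring
    rw [this, Real.Gamma_add_one (ne_of_gt (by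
      have h0 : (0:ℝ) ≤ (m:ℝ) := Nat.cast_nonneg m
      linarith : (0:ℝ) < (m:ℝ) + 1 + a))]
  have hterm1 : 0 ≤ y ^ m / (m.factorial * Real.Gamma ((m:ℝ) + 1 + a)) := term_nonneg ha x m
  have hterm2 : 0 ≤ y ^ (m+1) / ((m+1).factorial * Real.Gamma (((m+1:ℕ):ℝ) + 1 + a)) :=
    term_nonneg ha x (m+1)
  rw [Real.norm_eq_abs, Real.norm_eq_abs, abs_of_nonneg hterm1, abs_of_nonneg hterm2]
  have hya : y ≤ ((m:ℝ)+1) / 2 := by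
    have : 2*y ≤ (⌈2*y⌉₊ : ℝ) := Nat.le_ceil _
    have h2 : (⌈2*y⌉₊ : ℝ) ≤ m := Nat.cast_le.mpr hm2
    linarith
  have hma : (1:ℝ) ≤ (m:ℝ) + 1 + a := by
    have : (1:ℝ) ≤ (m:ℝ) := by exact_mod_cast hm1
    linarith
  have h5 : ((m:ℝ)+1+a) ≠ 0 := by linarith
  have h6 : Real.Gamma ((m:ℝ)+1+a) ≠ 0 := ne_of_gt hG1
  have h7 : ((m.factorial:ℝ)) ≠ 0 := ne_of_gt hfact
  have h8 : ((m:ℝ)+1) ≠ 0 := by positivity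
  have heq : y ^ (m+1) / ((((m+1).factorial):ℝ) * Real.Gamma (((m+1:ℕ):ℝ) + 1 + a))
      = (y / (((m:ℝ)+1) * ((m:ℝ)+1+a))) * (y ^ m / (m.factorial * Real.Gamma ((m:ℝ)+1+a))) := by
    rw [hrec, Nat.factorial_succ, pow_succ]
    push_cast
    field_simp
  rw [heq]
  apply mul_le_mul_of_nonneg_right _ hterm1
  rw [div_le_iff₀ (by nlinarith : (0:ℝ) < ((m:ℝ)+1)*((m:ℝ)+1+a))]
  nlinarith

lemma T_nonneg {a : ℝ} (ha : -1 < a) (x : ℝ) : 0 ≤ T a x :=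
  tsum_nonneg (term_nonneg ha x)

lemma T_monotone {a : ℝ} (ha : -1 < a) : Monotone (T a) := by
  intro x y hxy
  apply Summable.tsum_le_tsum _ (T_summable ha x) (T_summable ha y)
  intro m
  have h1 := Gamma_term_pos ha m
  have : (x ⊔ 0) ≤ (y ⊔ 0) := sup_le_sup_right hxy 0
  have h2 : (0:ℝ) ≤ x ⊔ 0 := le_max_right _ _
  have h3 : (x ⊔ 0) ≤ (y ⊔ 0) := sup_le_sup_right hxy 0
  gcongr

lemma T_measurable {a : ℝ} (ha : -1 < a) : Measurable (T a) := (T_monotone ha).measurable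

lemma T_of_nonneg {a x : ℝ} (hx : 0 ≤ x) :
    T a x = ∑' m : ℕ, x ^ m / (m.factorial * Real.Gamma ((m:ℝ) + 1 + a)) := by
  rw [T, max_eq_left hx]

lemma T_zero {a : ℝ} : T a 0 = 1 / Real.Gamma (1 + a) := by
  rw [T_of_nonneg le_rfl, tsum_eq_single 0]
  · norm_num
  · intro m hm
    rw [zero_pow hm, zero_div]





lemma exp_deriv_aux {t : ℝ} (ht : 0 < t) (s : ℝ) :
    HasDerivAt (fun s : ℝ => -t * Real.exp (-s/t)) (Real.exp (-s/t)) s := by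
  have h1 : HasDerivAt (fun s : ℝ => -s/t) (-1/t) s := by
    simpa using ((hasDerivAt_id s).neg.div_const t)
  have h2 := (Real.hasDerivAt_exp (-s/t)).comp s h1
  have h3 := h2.const_mul (-t)
  refine h3.congr_deriv ?_
  field_simp

lemma expint {t : ℝ} (ht : 0 < t) {x : ℝ} (hx : 0 ≤ x) :
    ∫ s in Ioc (0:ℝ) x, Real.exp (-s/t) = t * (1 - Real.exp (-x/t)) := by
  rw [← intervalIntegral.integral_of_le hx]
  rw [intervalIntegral.integral_eq_sub_of_hasDerivAt
    (fun s _ => exp_deriv_aux ht s)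
    ((Real.continuous_exp.comp (by continuity)).intervalIntegrable 0 x)]
  simp only [neg_zero, zero_div, Real.exp_zero]
  ring

lemma F_volterra {μ : ℝ} (hμ0 : 0 < μ) {x : ℝ} (hx : 0 ≤ x) :
    F μ x = Real.Gamma μ - ∫ s in Ioc (0:ℝ) x, s ^ (μ - 1) * F (1 - μ) s := by
  rcases eq_or_lt_of_le hx with rfl | hx0
  · simp [F_zero hμ0]
  -- main case x > 0
  have meas0 : Measurable (fun p : ℝ × ℝ => p.1 ^ (μ - 2) * Real.exp (-p.1 - p.2 / p.1)) := by
    fun_prop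
  -- the inner-in-s integral of the kernel, computed explicitly
  have inner_s : ∀ t : ℝ, 0 < t →
      (∫ s in Ioc (0:ℝ) x, t ^ (μ - 2) * Real.exp (-t - s / t))
        = t ^ (μ - 1) * Real.exp (-t) * (1 - Real.exp (-x/t)) := by
    intro t ht
    have : ∀ s : ℝ, t ^ (μ - 2) * Real.exp (-t - s / t)
        = (t ^ (μ - 2) * Real.exp (-t)) * Real.exp (-s/t) := by
      intro s
      rw [show -t - s/t = -t + -(s/t) by ring, Real.exp_add, neg_div]
      ring
    simp_rw [this]
    rw [MeasureTheory.integral_const_mul, expint ht hx]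
    have : t ^ (μ - 2) * t = t ^ (μ - 1) := by
      rw [← Real.rpow_add_one ht.ne', show μ - 2 + 1 = μ - 1 by ring]
    calc t ^ (μ - 2) * Real.exp (-t) * (t * (1 - Real.exp (-x/t)))
        = (t ^ (μ - 2) * t) * Real.exp (-t) * (1 - Real.exp (-x/t)) := by ring
      _ = t ^ (μ - 1) * Real.exp (-t) * (1 - Real.exp (-x/t)) := by rw [this]
  -- integrability on the product
  have prodInt : Integrable (Function.uncurry
        (fun t s : ℝ => t ^ (μ - 2) * Real.exp (-t - s / t)))
      ((volume.restrict (Ioi 0)).prod (volume.restrict (Ioc 0 x))) := by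
    rw [MeasureTheory.integrable_prod_iff]
    · constructor
      · refine ae_restrict_of_forall_mem measurableSet_Ioi (fun t ht => ?_)
        have ht0 : (0:ℝ) < t := ht
        simp only [Function.uncurry_apply_pair]
        refine Integrable.mono' (integrable_const (t ^ (μ - 2) * Real.exp (-t)))
          ((by fun_prop : Measurable fun s : ℝ => t ^ (μ - 2) * Real.exp (-t - s / t)).aestronglyMeasurable) ?_
        refine ae_restrict_of_forall_mem measurableSet_Ioc (fun s hs => ?_)
        have hs0 : (0:ℝ) < s := hs.1
        have hnn : (0:ℝ) ≤ t ^ (μ - 2) * Real.exp (-t - s / t) := by positivity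
        rw [Real.norm_eq_abs, abs_of_nonneg hnn]
        apply mul_le_mul_of_nonneg_left _ (Real.rpow_nonneg ht0.le _)
        apply Real.exp_le_exp.mpr
        have : 0 ≤ s / t := by positivity
        linarith
      · have hbase : Integrable (fun t : ℝ => t ^ (μ - 1) * Real.exp (-t)) (volume.restrict (Ioi 0)) :=
          (Real.GammaIntegral_convergent hμ0).congr
            (ae_restrict_of_forall_mem measurableSet_Ioi (fun t ht => mul_comm _ _))
        have hexp : Integrable (fun t : ℝ => t ^ (μ - 1) * Real.exp (-t) * (1 - Real.exp (-x/t)))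
            (volume.restrict (Ioi 0)) := by
          refine Integrable.mono' hbase
            ((by fun_prop : Measurable fun t : ℝ => t ^ (μ - 1) * Real.exp (-t) * (1 - Real.exp (-x/t))).aestronglyMeasurable) ?_
          refine ae_restrict_of_forall_mem measurableSet_Ioi (fun t ht => ?_)
          have ht0 : (0:ℝ) < t := ht
          have h1 : Real.exp (-x/t) ≤ 1 := by
            rw [Real.exp_le_one_iff]
            have h2 : 0 ≤ x / t := by positivity
            rw [neg_div] at *
            linarith
          have h2 : 0 ≤ 1 - Real.exp (-x/t) := by linarith
          have hnn : (0:ℝ) ≤ t ^ (μ - 1) * Real.exp (-t) * (1 - Real.exp (-x/t)) := by positivity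
          rw [Real.norm_eq_abs, abs_of_nonneg hnn]
          nlinarith [mul_pos (Real.rpow_pos_of_pos ht0 (μ-1)) (Real.exp_pos (-t)), Real.exp_pos (-x/t)]
        refine hexp.congr ?_
        refine ae_restrict_of_forall_mem measurableSet_Ioi (fun t ht => ?_)
        have ht0 : (0:ℝ) < t := ht
        simp only [Function.uncurry_apply_pair]
        rw [← inner_s t ht0]
        refine setIntegral_congr_fun measurableSet_Ioc (fun s hs => ?_)
        have hs0 : (0:ℝ) < s := hs.1
        have hnn : (0:ℝ) ≤ t ^ (μ - 2) * Real.exp (-t - s / t) := by positivity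
        rw [Real.norm_eq_abs, abs_of_nonneg hnn]
    · exact meas0.aestronglyMeasurable
  -- the swap
  have swap := MeasureTheory.integral_integral_swap
    (f := fun t s : ℝ => t ^ (μ - 2) * Real.exp (-t - s / t)) prodInt
  -- difference identity
  have diff : F μ x - Real.Gamma μ
      = ∫ t in Ioi (0:ℝ), (t ^ (μ - 1) * Real.exp (-t - x / t) - t ^ (μ - 1) * Real.exp (-t)) := by
    rw [F_of_nonneg hx, ← F_zero hμ0, F_of_nonneg (le_refl (0:ℝ))]
    rw [MeasureTheory.integral_sub (integrableOn_kernel (Or.inl hx0) hx)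
      (by have h0 := integrableOn_kernel (μ := μ) (x := 0) (Or.inr hμ0) le_rfl; simp only [zero_div, sub_zero] at h0; exact h0)]
    congr 1
    refine setIntegral_congr_fun measurableSet_Ioi (fun t ht => ?_)
    rw [zero_div, sub_zero]
  have ptwise : ∀ t : ℝ, 0 < t →
      t ^ (μ - 1) * Real.exp (-t - x / t) - t ^ (μ - 1) * Real.exp (-t)
        = -(∫ s in Ioc (0:ℝ) x, t ^ (μ - 2) * Real.exp (-t - s / t)) := by
    intro t ht
    rw [inner_s t ht]
    have h3 : -t - x/t = -t + -(x/t) := by ring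
    rw [h3, Real.exp_add, neg_div]
    ring
  have diff2 : F μ x - Real.Gamma μ
      = -∫ t in Ioi (0:ℝ), (∫ s in Ioc (0:ℝ) x, t ^ (μ - 2) * Real.exp (-t - s / t)) := by
    rw [diff, ← MeasureTheory.integral_neg]
    refine setIntegral_congr_fun measurableSet_Ioi (fun t ht => ?_)
    exact ptwise t ht
  have final : (∫ s in Ioc (0:ℝ) x, (∫ t in Ioi (0:ℝ), t ^ (μ - 2) * Real.exp (-t - s / t)))
      = ∫ s in Ioc (0:ℝ) x, s ^ (μ - 1) * F (1 - μ) s := by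
    refine setIntegral_congr_fun measurableSet_Ioc (fun s hs => ?_)
    have hs0 : (0:ℝ) < s := hs.1
    have h1 : (∫ t in Ioi (0:ℝ), t ^ (μ - 2) * Real.exp (-t - s / t)) = F (μ - 1) s := by
      rw [F_of_nonneg hs0.le]
      refine setIntegral_congr_fun measurableSet_Ioi (fun t ht => ?_)
      rw [show μ - 1 - 1 = μ - 2 by ring]
    rw [h1, F_funEq hs0, show -(μ - 1) = 1 - μ by ring]
  have diff3 : F μ x - Real.Gamma μ = -(∫ s in Ioc (0:ℝ) x, s ^ (μ - 1) * F (1 - μ) s) := by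
    rw [diff2, swap, final]
  linarith





noncomputable def G (μ x : ℝ) : ℝ :=
  (π / Real.sin (π * μ)) * (T (-μ) x - (x ⊔ 0) ^ μ * T μ x)

lemma G_zero {μ : ℝ} (hμ0 : 0 < μ) (hμ1 : μ < 1) : G μ 0 = Real.Gamma μ := by
  rw [G, max_self, Real.zero_rpow hμ0.ne', zero_mul, sub_zero, T_zero]
  have hrefl := Real.Gamma_mul_Gamma_one_sub μ
  have hG1 : 0 < Real.Gamma (1 - μ) := Real.Gamma_pos_of_pos (by linarith)
  rw [show (1:ℝ) + -μ = 1 - μ by ring]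
  rw [← hrefl]
  field_simp

lemma G_measurable {μ : ℝ} (hμ0 : 0 < μ) (hμ1 : μ < 1) : Measurable (G μ) := by
  apply Measurable.const_mul
  apply Measurable.sub (T_measurable (by linarith))
  apply Measurable.mul _ (T_measurable (by linarith))
  exact (measurable_id.max measurable_const).pow_const μ

lemma int_rpow_Ioc {p : ℝ} (hp : -1 < p) {x : ℝ} (hx : 0 ≤ x) :
    ∫ s in Ioc (0:ℝ) x, s ^ p = x ^ (p+1) / (p+1) := by
  rw [← intervalIntegral.integral_of_le hx, integral_rpow (Or.inl hp),
    Real.zero_rpow (by linarith : p + 1 ≠ 0)]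
  ring

lemma integrableOn_rpow_Ioc {p : ℝ} (hp : -1 < p) {x : ℝ} (hx : 0 ≤ x) :
    IntegrableOn (fun s : ℝ => s ^ p) (Ioc 0 x) := by
  have := (intervalIntegral.intervalIntegrable_rpow' (a := 0) (b := x) hp)
  rwa [intervalIntegrable_iff_integrableOn_Ioc_of_le hx] at this

-- first series integral
lemma seriesI1 {μ : ℝ} (hμ0 : 0 < μ) (hμ1 : μ < 1) {x : ℝ} (hx : 0 < x) :
    ∫ s in Ioc (0:ℝ) x, s ^ (μ-1) * T (μ-1) s = x ^ μ * T μ x := by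
  have hcongr : ∀ s ∈ Ioc (0:ℝ) x, s ^ (μ-1) * T (μ-1) s
      = ∑' m : ℕ, s ^ (μ-1+(m:ℝ)) / (m.factorial * Real.Gamma ((m:ℝ) + μ)) := by
    intro s hs
    have hs0 : (0:ℝ) < s := hs.1
    rw [T_of_nonneg hs0.le, ← tsum_mul_left]
    congr 1
    funext m
    rw [show (m:ℝ) + 1 + (μ - 1) = (m:ℝ) + μ by ring]
    rw [Real.rpow_add hs0, Real.rpow_natCast]
    field_simp
  rw [setIntegral_congr_fun measurableSet_Ioc hcongr]
  have hterm : ∀ m : ℕ, 0 < (m.factorial : ℝ) * Real.Gamma ((m:ℝ) + μ) := by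
    intro m
    have h1 : 0 < Real.Gamma ((m:ℝ) + μ) := by
      apply Real.Gamma_pos_of_pos
      have : (0:ℝ) ≤ m := Nat.cast_nonneg m
      linarith
    positivity
  have hint : ∀ m : ℕ, IntegrableOn
      (fun s : ℝ => s ^ (μ-1+(m:ℝ)) / (m.factorial * Real.Gamma ((m:ℝ) + μ))) (Ioc 0 x) := by
    intro m
    exact (integrableOn_rpow_Ioc (by push_cast; linarith) hx.le).div_const _
  have hval : ∀ m : ℕ, (∫ s in Ioc (0:ℝ) x, s ^ (μ-1+(m:ℝ)) / (m.factorial * Real.Gamma ((m:ℝ) + μ)))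
      = x ^ (μ+(m:ℝ)) / ((μ+(m:ℝ)) * (m.factorial * Real.Gamma ((m:ℝ) + μ))) := by
    intro m
    rw [MeasureTheory.integral_div, int_rpow_Ioc (by push_cast; linarith) hx.le]
    rw [show μ - 1 + (m:ℝ) + 1 = μ + (m:ℝ) by ring]
    have h2 : (0:ℝ) < μ + m := by have : (0:ℝ) ≤ m := Nat.cast_nonneg m; linarith
    have h3 := hterm m
    rw [div_div]
  rw [← MeasureTheory.integral_tsum_of_summable_integral_norm hint ?_]
  · -- compute the sum
    have : ∀ m : ℕ, (∫ s in Ioc (0:ℝ) x, s ^ (μ-1+(m:ℝ)) / (m.factorial * Real.Gamma ((m:ℝ) + μ)))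
        = x ^ μ * (x ^ m / (m.factorial * Real.Gamma ((m:ℝ) + 1 + μ))) := by
      intro m
      rw [hval m]
      have hΓ : Real.Gamma ((m:ℝ) + 1 + μ) = ((m:ℝ) + μ) * Real.Gamma ((m:ℝ) + μ) := by
        rw [show (m:ℝ) + 1 + μ = ((m:ℝ) + μ) + 1 by ring]
        rw [Real.Gamma_add_one (ne_of_gt (by
          have : (0:ℝ) ≤ m := Nat.cast_nonneg m
          linarith : (0:ℝ) < (m:ℝ) + μ))]
      rw [hΓ, Real.rpow_add hx, Real.rpow_natCast]
      have h2 : (0:ℝ) < (m:ℝ) + μ := by have : (0:ℝ) ≤ m := Nat.cast_nonneg m; linarith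
      have h3 := hterm m
      have h4 : Real.Gamma ((m:ℝ) + μ) ≠ 0 := (Real.Gamma_pos_of_pos h2).ne'
      field_simp
      ring
    rw [tsum_congr this, tsum_mul_left, T_of_nonneg hx.le]
  · -- summability of integrals of norms
    have hdom : Summable (fun m : ℕ => (x ^ μ / μ) * (x ^ m / (m.factorial * Real.Gamma ((m:ℝ) + 1 + (μ-1))))) := by
      apply Summable.mul_left
      have := T_summable (a := μ - 1) (by linarith : (-1:ℝ) < μ - 1) x
      rwa [max_eq_left hx.le] at this
    refine Summable.of_nonneg_of_le (fun m => integral_nonneg (fun s => norm_nonneg _))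
      (fun m => ?_) hdom
    ·
      have hnrm : (∫ s in Ioc (0:ℝ) x, ‖s ^ (μ-1+(m:ℝ)) / (m.factorial * Real.Gamma ((m:ℝ) + μ))‖)
          = x ^ (μ+(m:ℝ)) / ((μ+(m:ℝ)) * (m.factorial * Real.Gamma ((m:ℝ) + μ))) := by
        rw [← hval m]
        refine setIntegral_congr_fun measurableSet_Ioc (fun s hs => ?_)
        have hs0 : (0:ℝ) < s := hs.1
        have := hterm m
        have hnn : 0 ≤ s ^ (μ-1+(m:ℝ)) / (m.factorial * Real.Gamma ((m:ℝ) + μ)) := by positivity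
        rw [Real.norm_eq_abs, abs_of_nonneg hnn]
      rw [hnrm]
      have h2 : (0:ℝ) < μ + m := by have : (0:ℝ) ≤ m := Nat.cast_nonneg m; linarith
      have h3 := hterm m
      rw [Real.rpow_add hx, Real.rpow_natCast, show (m:ℝ) + 1 + (μ-1) = (m:ℝ) + μ by ring]
      rw [div_le_iff₀ (by positivity : (0:ℝ) < (μ + (m:ℝ)) * ((m.factorial:ℝ) * Real.Gamma ((m:ℝ) + μ)))]
      have h4 : μ ≤ μ + (m:ℝ) := by have : (0:ℝ) ≤ m := Nat.cast_nonneg m; linarith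
      have h6 : 0 ≤ x ^ μ * x ^ m := by positivity
      have h7 : x ^ μ / μ * (x ^ m / ((m.factorial:ℝ) * Real.Gamma ((m:ℝ) + μ)))
          * ((μ + (m:ℝ)) * ((m.factorial:ℝ) * Real.Gamma ((m:ℝ) + μ)))
          = (x ^ μ * x ^ m) * ((μ + (m:ℝ))/μ) := by
        field_simp
      rw [h7]
      have h8 : 1 ≤ (μ + (m:ℝ))/μ := by rw [le_div_iff₀ hμ0]; linarith
      nlinarith

-- second series integral
lemma seriesI2 {μ : ℝ} (hμ0 : 0 < μ) (hμ1 : μ < 1) {x : ℝ} (hx : 0 < x) :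
    ∫ s in Ioc (0:ℝ) x, s ^ (μ-1) * (s ^ (1-μ) * T (1-μ) s)
      = T (-μ) x - 1/Real.Gamma (1-μ) := by
  have hGpos : ∀ m : ℕ, 0 < Real.Gamma ((m:ℝ) + 2 - μ) := by
    intro m
    apply Real.Gamma_pos_of_pos
    have : (0:ℝ) ≤ m := Nat.cast_nonneg m
    linarith
  have hcongr : ∀ s ∈ Ioc (0:ℝ) x, s ^ (μ-1) * (s ^ (1-μ) * T (1-μ) s)
      = ∑' m : ℕ, s ^ ((m:ℝ)) / (m.factorial * Real.Gamma ((m:ℝ) + 2 - μ)) := by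
    intro s hs
    have hs0 : (0:ℝ) < s := hs.1
    rw [← mul_assoc, ← Real.rpow_add hs0, show μ - 1 + (1 - μ) = (0:ℝ) by ring,
      Real.rpow_zero, one_mul, T_of_nonneg hs0.le]
    congr 1
    funext m
    rw [show (m:ℝ) + 1 + (1 - μ) = (m:ℝ) + 2 - μ by ring, Real.rpow_natCast]
  rw [setIntegral_congr_fun measurableSet_Ioc hcongr]
  have hint : ∀ m : ℕ, IntegrableOn
      (fun s : ℝ => s ^ ((m:ℝ)) / (m.factorial * Real.Gamma ((m:ℝ) + 2 - μ))) (Ioc 0 x) := by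
    intro m
    refine (integrableOn_rpow_Ioc (by
      have : (0:ℝ) ≤ m := Nat.cast_nonneg m
      linarith) hx.le).div_const _
  have hval : ∀ m : ℕ, (∫ s in Ioc (0:ℝ) x, s ^ ((m:ℝ)) / (m.factorial * Real.Gamma ((m:ℝ) + 2 - μ)))
      = x ^ (m+1) / ((m+1).factorial * Real.Gamma (((m+1:ℕ):ℝ) + 1 + (-μ))) := by
    intro m
    rw [MeasureTheory.integral_div, int_rpow_Ioc (by
      have : (0:ℝ) ≤ m := Nat.cast_nonneg m
      linarith) hx.le]
    have h1 : x ^ ((m:ℝ)+1) = x ^ (m+1) := by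
      rw [show (m:ℝ) + 1 = ((m+1:ℕ):ℝ) by push_cast; ring, Real.rpow_natCast]
    rw [h1]
    have h2 : Real.Gamma (((m+1:ℕ):ℝ) + 1 + (-μ)) = Real.Gamma ((m:ℝ) + 2 - μ) := by
      congr 1
      push_cast
      ring
    rw [h2, Nat.factorial_succ, div_div]
    congr 1
    push_cast
    ring
  have hshift : Summable (fun m : ℕ => x ^ (m+1) / ((m+1).factorial * Real.Gamma (((m+1:ℕ):ℝ) + 1 + (-μ)))) := by
    have h0 := T_summable (a := -μ) (by linarith : (-1:ℝ) < -μ) x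
    rw [max_eq_left hx.le] at h0
    exact ((summable_nat_add_iff 1).mpr h0)
  rw [← MeasureTheory.integral_tsum_of_summable_integral_norm hint ?_]
  · rw [tsum_congr hval]
    have hT := T_summable (a := -μ) (by linarith : (-1:ℝ) < -μ) x
    rw [max_eq_left hx.le] at hT
    have := hT.tsum_eq_zero_add
    rw [T_of_nonneg hx.le]
    rw [this]
    simp only [pow_zero, Nat.factorial_zero, Nat.cast_one, Nat.cast_zero]
    rw [show (0:ℝ) + 1 + -μ = 1 - μ by ring]
    ring
  · refine Summable.of_nonneg_of_le (fun m => integral_nonneg (fun s => norm_nonneg _))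
      (fun m => ?_) hshift
    have hnrm : (∫ s in Ioc (0:ℝ) x, ‖s ^ ((m:ℝ)) / (m.factorial * Real.Gamma ((m:ℝ) + 2 - μ))‖)
        = x ^ (m+1) / ((m+1).factorial * Real.Gamma (((m+1:ℕ):ℝ) + 1 + (-μ))) := by
      rw [← hval m]
      refine setIntegral_congr_fun measurableSet_Ioc (fun s hs => ?_)
      have hs0 : (0:ℝ) < s := hs.1
      have h3 := hGpos m
      have hnn : 0 ≤ s ^ ((m:ℝ)) / (m.factorial * Real.Gamma ((m:ℝ) + 2 - μ)) := by positivity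
      rw [Real.norm_eq_abs, abs_of_nonneg hnn]
    rw [hnrm]

lemma sinpos {μ : ℝ} (hμ0 : 0 < μ) (hμ1 : μ < 1) : 0 < Real.sin (π * μ) := by
  apply Real.sin_pos_of_pos_of_lt_pi
  · positivity
  · nlinarith [Real.pi_pos]

lemma G_volterra {μ : ℝ} (hμ0 : 0 < μ) (hμ1 : μ < 1) {x : ℝ} (hx : 0 ≤ x) :
    G μ x = Real.Gamma μ - ∫ s in Ioc (0:ℝ) x, s ^ (μ-1) * G (1-μ) s := by
  rcases eq_or_lt_of_le hx with rfl | hx0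
  · simp [G_zero hμ0 hμ1]
  have hsin : Real.sin (π * (1-μ)) = Real.sin (π * μ) := by
    rw [show π*(1-μ) = π - π*μ by ring, Real.sin_pi_sub]
  set C : ℝ := π / Real.sin (π * μ) with hC
  have hμ1' : 0 < 1 - μ := by linarith
  have hcongr : ∀ s ∈ Ioc (0:ℝ) x, s ^ (μ-1) * G (1-μ) s
      = C * (s ^ (μ-1) * T (μ-1) s - s ^ (μ-1) * (s ^ (1-μ) * T (1-μ) s)) := by
    intro s hs
    have hs0 : (0:ℝ) < s := hs.1
    rw [G, hsin, max_eq_left hs0.le, show -(1-μ) = μ - 1 by ring]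
    ring
  rw [setIntegral_congr_fun measurableSet_Ioc hcongr, MeasureTheory.integral_const_mul]
  have intA : IntegrableOn (fun s : ℝ => s ^ (μ-1) * T (μ-1) s) (Ioc 0 x) := by
    refine Integrable.mono' ((integrableOn_rpow_Ioc (by linarith : (-1:ℝ) < μ-1) hx).mul_const
      (T (μ-1) x))
      (((by fun_prop : Measurable fun s : ℝ => s ^ (μ-1)).mul
        (T_measurable (by linarith))).aestronglyMeasurable) ?_
    refine ae_restrict_of_forall_mem measurableSet_Ioc (fun s hs => ?_)
    have hs0 : (0:ℝ) < s := hs.1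
    have hTn := T_nonneg (a := μ-1) (by linarith) s
    have hnn : 0 ≤ s ^ (μ-1) * T (μ-1) s := by positivity
    rw [Real.norm_eq_abs, abs_of_nonneg hnn]
    exact mul_le_mul_of_nonneg_left (T_monotone (by linarith) hs.2) (Real.rpow_nonneg hs0.le _)
  have intB : IntegrableOn (fun s : ℝ => s ^ (μ-1) * (s ^ (1-μ) * T (1-μ) s)) (Ioc 0 x) := by
    refine Integrable.mono' (integrable_const (T (1-μ) x))
      (((by fun_prop : Measurable fun s : ℝ => s ^ (μ-1)).mul
        (((by fun_prop : Measurable fun s : ℝ => s ^ (1-μ)).mul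
          (T_measurable (by linarith))))).aestronglyMeasurable) ?_
    refine ae_restrict_of_forall_mem measurableSet_Ioc (fun s hs => ?_)
    have hs0 : (0:ℝ) < s := hs.1
    have heq : s ^ (μ-1) * (s ^ (1-μ) * T (1-μ) s) = T (1-μ) s := by
      rw [← mul_assoc, ← Real.rpow_add hs0, show μ - 1 + (1 - μ) = (0:ℝ) by ring,
        Real.rpow_zero, one_mul]
    rw [heq, Real.norm_eq_abs, abs_of_nonneg (T_nonneg (by linarith) s)]
    exact T_monotone (by linarith) hs.2
  rw [MeasureTheory.integral_sub intA intB, seriesI1 hμ0 hμ1 hx0, seriesI2 hμ0 hμ1 hx0]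
  have hsinpos := sinpos hμ0 hμ1
  have hGpos : 0 < Real.Gamma (1-μ) := Real.Gamma_pos_of_pos hμ1'
  have hrefl : Real.Gamma μ * Real.Gamma (1-μ) = C := Real.Gamma_mul_Gamma_one_sub μ
  have hCG : C / Real.Gamma (1-μ) = Real.Gamma μ := by
    rw [← hrefl]
    field_simp
  rw [G, max_eq_left hx]
  have : C * (x ^ μ * T μ x - (T (-μ) x - 1/Real.Gamma (1-μ)))
      = C * x ^ μ * T μ x - C * T (-μ) x + C / Real.Gamma (1-μ) := by
    field_simp
    ring
  rw [this, hCG]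
  ring





lemma G_abs_le {ν : ℝ} (hν0 : 0 < ν) (hν1 : ν < 1) {s X : ℝ} (hs : 0 ≤ s) (hsX : s ≤ X) :
    |G ν s| ≤ (π / Real.sin (π * ν)) * (T (-ν) X + X ^ ν * T ν X) := by
  have hC : 0 < π / Real.sin (π * ν) := by
    have := sinpos hν0 hν1
    positivity
  rw [G, abs_mul, abs_of_pos hC]
  apply mul_le_mul_of_nonneg_left _ hC.le
  have hX : 0 ≤ X := le_trans hs hsX
  have h1 : 0 ≤ T (-ν) s := T_nonneg (by linarith) s
  have h2 : 0 ≤ T ν s := T_nonneg (by linarith) s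
  have h3 : (0:ℝ) ≤ (s ⊔ 0) ^ ν := Real.rpow_nonneg (le_max_right _ _) _
  have habs : |T (-ν) s - (s ⊔ 0) ^ ν * T ν s| ≤ T (-ν) s + (s ⊔ 0) ^ ν * T ν s := by
    rw [abs_sub_comm]
    calc |(s ⊔ 0) ^ ν * T ν s - T (-ν) s| ≤ |(s ⊔ 0) ^ ν * T ν s| + |T (-ν) s| := abs_sub _ _
      _ = (s ⊔ 0) ^ ν * T ν s + T (-ν) s := by
          rw [abs_of_nonneg (by positivity), abs_of_nonneg h1]
      _ = T (-ν) s + (s ⊔ 0) ^ ν * T ν s := by ring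
  refine habs.trans ?_
  have hm1 : T (-ν) s ≤ T (-ν) X := T_monotone (by linarith) hsX
  have hm2 : T ν s ≤ T ν X := T_monotone (by linarith) hsX
  have hm3 : (s ⊔ 0) ^ ν ≤ X ^ ν := by
    rw [max_eq_left hs]
    exact Real.rpow_le_rpow hs hsX hν0.le
  have h4 : 0 ≤ T ν X := le_trans h2 hm2
  nlinarith

lemma abs_int_le {f : ℝ → ℝ} {c p y : ℝ} (hc : 0 ≤ c) (hp : -1 < p) (hy : 0 < y)
    (hbd : ∀ s ∈ Ioc (0:ℝ) y, |f s| ≤ c * s ^ p) :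
    |∫ s in Ioc (0:ℝ) y, f s| ≤ c * (y ^ (p+1) / (p+1)) := by
  have hgint : Integrable (fun s : ℝ => c * s ^ p) (volume.restrict (Ioc 0 y)) :=
    (integrableOn_rpow_Ioc hp hy.le).const_mul c
  have h := MeasureTheory.norm_integral_le_of_norm_le hgint
    (ae_restrict_of_forall_mem measurableSet_Ioc (fun s hs => by
      rw [Real.norm_eq_abs]; exact hbd s hs))
  rw [Real.norm_eq_abs] at h
  refine h.trans ?_
  rw [MeasureTheory.integral_const_mul, int_rpow_Ioc hp hy.le]

lemma F_eq_G {μ : ℝ} (hμ0 : 0 < μ) (hμ1 : μ < 1) {x : ℝ} (hx : 0 ≤ x) : F μ x = G μ x := by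
  rcases eq_or_lt_of_le hx with rfl | hx0
  · rw [F_zero hμ0, G_zero hμ0 hμ1]
  have hμ1' : 0 < 1 - μ := by linarith
  have hsin : Real.sin (π * (1 - μ)) = Real.sin (π * μ) := by
    rw [show π*(1-μ) = π - π*μ by ring, Real.sin_pi_sub]
  set d : ℝ → ℝ := fun s => F μ s - G μ s with hd
  set e : ℝ → ℝ := fun s => F (1-μ) s - G (1-μ) s with he
  -- uniform bound for e on [0, x]
  set E : ℝ := Real.Gamma (1-μ) + (π / Real.sin (π * μ)) * (T (μ-1) x + x^(1-μ) * T (1-μ) x)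
    with hEdef
  have hE : ∀ s, 0 < s → s ≤ x → |e s| ≤ E := by
    intro s hs hsx
    have h1 : |F (1-μ) s| ≤ Real.Gamma (1-μ) := by
      rw [abs_of_nonneg (F_nonneg _ _)]
      exact F_le_Gamma hμ1' s
    have h2 := G_abs_le hμ1' (by linarith) hs.le hsx
    rw [hsin] at h2
    calc |e s| ≤ |F (1-μ) s| + |G (1-μ) s| := abs_sub _ _
      _ ≤ E := by
        rw [hEdef, show -(1-μ) = μ - 1 by ring] at *
        linarith
  have hE0 : 0 ≤ E := le_trans (abs_nonneg _) (hE x hx0 le_rfl)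
  -- integrability of the four kernels
  have intF : ∀ {ν : ℝ}, 0 < ν → ν < 1 → ∀ {y : ℝ}, 0 ≤ y →
      IntegrableOn (fun s : ℝ => s ^ (ν-1) * F (1-ν) s) (Ioc 0 y) := by
    intro ν hν0 hν1 y hy
    refine Integrable.mono' ((integrableOn_rpow_Ioc (by linarith : (-1:ℝ) < ν-1) hy).mul_const
      (Real.Gamma (1-ν)))
      (((by fun_prop : Measurable fun s : ℝ => s ^ (ν-1)).mul
        (F_measurable (by linarith))).aestronglyMeasurable) ?_
    refine ae_restrict_of_forall_mem measurableSet_Ioc (fun s hs => ?_)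
    have hs0 : (0:ℝ) < s := hs.1
    have hnn : 0 ≤ s ^ (ν-1) * F (1-ν) s := mul_nonneg (Real.rpow_nonneg hs0.le _) (F_nonneg _ _)
    rw [Real.norm_eq_abs, abs_of_nonneg hnn]
    exact mul_le_mul_of_nonneg_left (F_le_Gamma (by linarith) s) (Real.rpow_nonneg hs0.le _)
  have intG : ∀ {ν : ℝ}, 0 < ν → ν < 1 → ∀ {y : ℝ}, 0 ≤ y →
      IntegrableOn (fun s : ℝ => s ^ (ν-1) * G (1-ν) s) (Ioc 0 y) := by
    intro ν hν0 hν1 y hy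
    refine Integrable.mono' ((integrableOn_rpow_Ioc (by linarith : (-1:ℝ) < ν-1) hy).mul_const
      ((π / Real.sin (π * (1-ν))) * (T (-(1-ν)) y + y ^ (1-ν) * T (1-ν) y)))
      (((by fun_prop : Measurable fun s : ℝ => s ^ (ν-1)).mul
        (G_measurable (by linarith) (by linarith))).aestronglyMeasurable) ?_
    refine ae_restrict_of_forall_mem measurableSet_Ioc (fun s hs => ?_)
    have hs0 : (0:ℝ) < s := hs.1
    rw [Real.norm_eq_abs, abs_mul, abs_of_nonneg (Real.rpow_nonneg hs0.le (ν-1))]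
    exact mul_le_mul_of_nonneg_left
      (G_abs_le (by linarith) (by linarith) hs0.le hs.2) (Real.rpow_nonneg hs0.le _)
  -- the difference integral equations
  have hd_eq : ∀ y : ℝ, 0 ≤ y → d y = -∫ s in Ioc (0:ℝ) y, s ^ (μ-1) * e s := by
    intro y hy
    rw [hd]
    simp only
    rw [F_volterra hμ0 hy, G_volterra hμ0 hμ1 hy]
    have : (∫ s in Ioc (0:ℝ) y, s ^ (μ-1) * e s)
        = (∫ s in Ioc (0:ℝ) y, s ^ (μ-1) * F (1-μ) s)
          - ∫ s in Ioc (0:ℝ) y, s ^ (μ-1) * G (1-μ) s := by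
      rw [← MeasureTheory.integral_sub (intF hμ0 hμ1 hy) (intG hμ0 hμ1 hy)]
      refine setIntegral_congr_fun measurableSet_Ioc (fun s hs => ?_)
      rw [he]
      ring
    rw [this]
    ring
  have he_eq : ∀ y : ℝ, 0 ≤ y → e y = -∫ s in Ioc (0:ℝ) y, s ^ (-μ) * d s := by
    intro y hy
    rw [he]
    simp only
    rw [F_volterra hμ1' hy, G_volterra hμ1' (by linarith) hy]
    have : (∫ s in Ioc (0:ℝ) y, s ^ (-μ) * d s)
        = (∫ s in Ioc (0:ℝ) y, s ^ ((1-μ)-1) * F (1-(1-μ)) s)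
          - ∫ s in Ioc (0:ℝ) y, s ^ ((1-μ)-1) * G (1-(1-μ)) s := by
      rw [← MeasureTheory.integral_sub (intF hμ1' (by linarith) hy) (intG hμ1' (by linarith) hy)]
      refine setIntegral_congr_fun measurableSet_Ioc (fun s hs => ?_)
      rw [hd, show (1-μ)-1 = -μ by ring, show 1-(1-μ) = μ by ring]
      ring
    rw [this]
    ring
  -- the induction
  have main : ∀ n : ℕ, ∀ y : ℝ, 0 < y → y ≤ x →
      |d y| ≤ (E/μ) * y ^ μ * (y ^ n / ((n.factorial : ℝ))^2) := by
    intro n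
    induction n with
    | zero =>
      intro y hy hyx
      rw [hd_eq y hy.le, abs_neg]
      have h := abs_int_le (f := fun s => s ^ (μ-1) * e s) (c := E) (p := μ-1)
        hE0 (by linarith) hy (fun s hs => by
          rw [abs_mul, abs_of_nonneg (Real.rpow_nonneg hs.1.le _)]
          exact (mul_le_mul_of_nonneg_left (hE s hs.1 (le_trans hs.2 hyx))
            (Real.rpow_nonneg hs.1.le _)).trans_eq (mul_comm _ _))
      refine h.trans (le_of_eq ?_)
      rw [show μ - 1 + 1 = μ by ring]
      simp [Nat.factorial_zero]
      field_simp
    | succ n ih =>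
      intro y hy hyx
      -- first, bound e on (0, y]
      have he_bd : ∀ z : ℝ, 0 < z → z ≤ x →
          |e z| ≤ (E/μ) / ((n.factorial : ℝ))^2 * (z ^ (n+1) / ((n:ℝ)+1)) := by
        intro z hz hzx
        rw [he_eq z hz.le, abs_neg]
        have h := abs_int_le (f := fun s => s ^ (-μ) * d s)
          (c := (E/μ) / ((n.factorial : ℝ))^2) (p := (n:ℝ))
          (by positivity) (by have := Nat.cast_nonneg (α := ℝ) n; linarith) hz (fun s hs => ?_)
        · refine h.trans (le_of_eq ?_)
          rw [show (n:ℝ) + 1 = ((n+1:ℕ):ℝ) by push_cast; ring, Real.rpow_natCast]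
        · have hs0 : (0:ℝ) < s := hs.1
          rw [abs_mul, abs_of_nonneg (Real.rpow_nonneg hs0.le _)]
          have hih := ih s hs0 (le_trans hs.2 hzx)
          calc s ^ (-μ) * |d s| ≤ s ^ (-μ) * ((E/μ) * s ^ μ * (s ^ n / ((n.factorial : ℝ))^2)) :=
                mul_le_mul_of_nonneg_left hih (Real.rpow_nonneg hs0.le _)
            _ = (E/μ) / ((n.factorial : ℝ))^2 * s ^ ((n:ℝ)) := by
                rw [Real.rpow_natCast]
                have h1 : s ^ (-μ) * s ^ μ = 1 := by
                  rw [← Real.rpow_add hs0]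
                  norm_num
                calc s ^ (-μ) * (E / μ * s ^ μ * (s ^ n / ((n.factorial : ℝ))^2))
                    = (s ^ (-μ) * s ^ μ) * (E / μ * (s ^ n / ((n.factorial : ℝ))^2)) := by ring
                  _ = (E/μ) / ((n.factorial : ℝ))^2 * s ^ n := by rw [h1]; ring
      -- then bound d on (0, y]
      rw [hd_eq y hy.le, abs_neg]
      have h := abs_int_le (f := fun s => s ^ (μ-1) * e s)
        (c := (E/μ) / ((n.factorial : ℝ))^2 / ((n:ℝ)+1)) (p := μ + (n:ℝ))
        (by positivity) (by have := Nat.cast_nonneg (α := ℝ) n; linarith) hy (fun s hs => ?_)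
      · refine h.trans ?_
        have hfact : ((n+1).factorial : ℝ) = ((n:ℝ)+1) * (n.factorial : ℝ) := by
          rw [Nat.factorial_succ]; push_cast; ring
        have h1 : y ^ (μ + (n:ℝ) + 1) = y ^ μ * y ^ (n+1) := by
          rw [show μ + (n:ℝ) + 1 = μ + ((n+1:ℕ):ℝ) by push_cast; ring,
            Real.rpow_add hy, Real.rpow_natCast]
        rw [h1, hfact]
        have hnum : (0:ℝ) < (n:ℝ) + 1 := by positivity
        have hden : ((n:ℝ)+1) ≤ μ + (n:ℝ) + 1 := by linarith
        have hfac2 : (0:ℝ) < ((n.factorial:ℝ))^2 := by positivity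
        have hyp : 0 ≤ y ^ μ * y ^ (n+1) := by positivity
        have hstep : y ^ μ * y ^ (n+1) / (μ + (n:ℝ) + 1) ≤ y ^ μ * y ^ (n+1) / ((n:ℝ)+1) :=
          div_le_div_of_nonneg_left hyp (by positivity) hden
        calc (E/μ) / ((n.factorial : ℝ))^2 / ((n:ℝ)+1) * (y ^ μ * y ^ (n+1) / (μ + (n:ℝ) + 1))
            ≤ (E/μ) / ((n.factorial : ℝ))^2 / ((n:ℝ)+1) * (y ^ μ * y ^ (n+1) / ((n:ℝ)+1)) := by
              apply mul_le_mul_of_nonneg_left hstep (by positivity)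
          _ = E / μ * y ^ μ * (y ^ (n+1) / (((n:ℝ)+1) * ↑n.factorial) ^ 2) := by
              field_simp
      · have hs0 : (0:ℝ) < s := hs.1
        rw [abs_mul, abs_of_nonneg (Real.rpow_nonneg hs0.le _)]
        have hz := he_bd s hs0 (le_trans hs.2 hyx)
        calc s ^ (μ-1) * |e s|
            ≤ s ^ (μ-1) * ((E/μ) / ((n.factorial : ℝ))^2 * (s ^ (n+1) / ((n:ℝ)+1))) :=
              mul_le_mul_of_nonneg_left hz (Real.rpow_nonneg hs0.le _)
          _ = (E/μ) / ((n.factorial : ℝ))^2 / ((n:ℝ)+1) * s ^ (μ + (n:ℝ)) := by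
              have h2 : s ^ (μ-1) * s ^ (n+1) = s ^ (μ + (n:ℝ)) := by
                rw [← Real.rpow_natCast s (n+1), ← Real.rpow_add hs0]
                congr 1
                push_cast
                ring
              calc s ^ (μ-1) * ((E/μ) / ((n.factorial : ℝ))^2 * (s ^ (n+1) / ((n:ℝ)+1)))
                  = (s ^ (μ-1) * s ^ (n+1)) * ((E/μ) / ((n.factorial : ℝ))^2 / ((n:ℝ)+1)) := by
                    ring
                _ = _ := by rw [h2]; ring
  -- conclusion
  have hlim : Tendsto (fun n : ℕ => (E/μ) * x ^ μ * (x ^ n / ((n.factorial : ℝ))^2))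
      atTop (nhds 0) := by
    have h1 : Tendsto (fun n : ℕ => x ^ n / (n.factorial : ℝ)) atTop (nhds 0) :=
      FloorSemiring.tendsto_pow_div_factorial_atTop x
    have h2 : Tendsto (fun n : ℕ => x ^ n / ((n.factorial : ℝ))^2) atTop (nhds 0) := by
      apply squeeze_zero (fun n => by positivity) (fun n => ?_) h1
      have hf1 : (1:ℝ) ≤ (n.factorial : ℝ) := by exact_mod_cast n.factorial_pos
      apply div_le_div_of_nonneg_left (by positivity) (by positivity)
      nlinarith
    have := h2.const_mul ((E/μ) * x ^ μ)
    simpa using this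
  have hbound : ∀ n : ℕ, |d x| ≤ (E/μ) * x ^ μ * (x ^ n / ((n.factorial : ℝ))^2) :=
    fun n => main n x hx0 le_rfl
  have : |d x| ≤ 0 := ge_of_tendsto hlim (Filter.Eventually.of_forall hbound)
  have : d x = 0 := abs_eq_zero.mp (le_antisymm this (abs_nonneg _))
  rw [hd] at this
  simp only at this
  linarith






lemma one_sub_theta {k u : ℝ} (hk0 : 0 < k) (hk1 : k < 1) (hu : 0 < u) :
    1 - theta k u = Real.Gamma ((k+1)/2) *
      (T ((k-1)/2) (u^2/4) - (u/2)^(1-k) * T ((1-k)/2) (u^2/4)) := by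
  set q : ℝ := u/2 with hqdef
  have hq : 0 < q := by positivity
  have hxq : u^2/4 = q^2 := by rw [hqdef]; ring
  have hx0 : (0:ℝ) ≤ q^2 := sq_nonneg q
  -- the two reference series
  have hTA : T ((1-k)/2) (q^2) = ∑' m : ℕ, (q^2) ^ m /
      (m.factorial * Real.Gamma ((m:ℝ) + 1 + (1-k)/2)) := T_of_nonneg hx0
  have hTB : T ((k-1)/2) (q^2) = ∑' m : ℕ, (q^2) ^ m /
      (m.factorial * Real.Gamma ((m:ℝ) + 1 + (k-1)/2)) := T_of_nonneg hx0
  have hsumA : Summable (fun m : ℕ => (q^2) ^ m / (m.factorial * Real.Gamma ((m:ℝ) + 1 + (1-k)/2))) := by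
    have := T_summable (a := (1-k)/2) (by linarith) (q^2)
    rwa [max_eq_left hx0] at this
  have hsumB : Summable (fun m : ℕ => (q^2) ^ m / (m.factorial * Real.Gamma ((m:ℝ) + 1 + (k-1)/2))) := by
    have := T_summable (a := (k-1)/2) (by linarith) (q^2)
    rwa [max_eq_left hx0] at this
  have hshiftA := hsumA.tsum_eq_zero_add
  have hshiftB := hsumB.tsum_eq_zero_add
  -- rewrite the first theta sum
  have h1 : (∑' m : ℕ, (u/2) ^ (2*((m:ℝ)+1) - k + 1) /
        ((Nat.factorial (m+1)) * Real.Gamma (((m:ℝ)+1) + (3-k)/2)))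
      = q^(1-k) * (T ((1-k)/2) (q^2) - 1/Real.Gamma ((3-k)/2)) := by
    have hterm : ∀ m : ℕ, (u/2) ^ (2*((m:ℝ)+1) - k + 1) /
          ((Nat.factorial (m+1)) * Real.Gamma (((m:ℝ)+1) + (3-k)/2))
        = q^(1-k) * ((q^2) ^ (m+1) /
          (((m+1).factorial) * Real.Gamma (((m+1:ℕ):ℝ) + 1 + (1-k)/2))) := by
      intro m
      have hpow : (u/2) ^ (2*((m:ℝ)+1) - k + 1) = (q^2)^(m+1) * q^(1-k) := by
        rw [show 2*((m:ℝ)+1) - k + 1 = ((2*(m+1):ℕ):ℝ) + (1-k) by push_cast; ring]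
        rw [Real.rpow_add hq, Real.rpow_natCast, pow_mul]
      have hden : Real.Gamma (((m:ℝ)+1) + (3-k)/2)
          = Real.Gamma (((m+1:ℕ):ℝ) + 1 + (1-k)/2) := by
        congr 1
        push_cast
        ring
      rw [hpow, hden]
      ring
    rw [tsum_congr hterm, tsum_mul_left]
    congr 1
    rw [hTA, hshiftA]
    simp only [pow_zero, Nat.cast_zero, Nat.factorial_zero, Nat.cast_one]
    rw [show (0:ℝ) + 1 + (1-k)/2 = (3-k)/2 by ring]
    push_cast
    ring
  -- rewrite the second theta sum
  have h2 : (∑' m : ℕ, (u/2) ^ (2*((m:ℝ)+1)) /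
        ((Nat.factorial (m+1)) * Real.Gamma (((m:ℝ)+1) + (k+1)/2)))
      = T ((k-1)/2) (q^2) - 1/Real.Gamma ((k+1)/2) := by
    have hterm : ∀ m : ℕ, (u/2) ^ (2*((m:ℝ)+1)) /
          ((Nat.factorial (m+1)) * Real.Gamma (((m:ℝ)+1) + (k+1)/2))
        = (q^2) ^ (m+1) / (((m+1).factorial) * Real.Gamma (((m+1:ℕ):ℝ) + 1 + (k-1)/2)) := by
      intro m
      have hpow : (u/2) ^ (2*((m:ℝ)+1)) = (q^2)^(m+1) := by
        rw [show 2*((m:ℝ)+1) = ((2*(m+1):ℕ):ℝ) by push_cast; ring]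
        rw [Real.rpow_natCast, pow_mul]
      have hden : Real.Gamma (((m:ℝ)+1) + (k+1)/2)
          = Real.Gamma (((m+1:ℕ):ℝ) + 1 + (k-1)/2) := by
        congr 1
        push_cast
        ring
      rw [hpow, hden]
    rw [tsum_congr hterm]
    rw [hTB, hshiftB]
    simp only [pow_zero, Nat.cast_zero, Nat.factorial_zero, Nat.cast_one]
    rw [show (0:ℝ) + 1 + (k-1)/2 = (k+1)/2 by ring]
    ring
  -- the stray first term
  have h3 : (2:ℝ)^(k-1) * u^(1-k) = q^(1-k) := by
    rw [hqdef, Real.div_rpow hu.le (by norm_num : (0:ℝ) ≤ 2)]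
    rw [div_eq_mul_inv, ← Real.rpow_neg (by norm_num : (0:ℝ) ≤ 2),
      show -(1-k) = k - 1 by ring]
    ring
  have hΓpos : 0 < Real.Gamma ((k+1)/2) := Real.Gamma_pos_of_pos (by linarith)
  rw [theta, h1, h2, h3, hxq]
  field_simp
  ring

lemma scalar_identity {k : ℝ} (hk0 : 0 < k) (hk1 : k < 1) :
    c1 k * (1/2) * (2:ℝ)^((1-k)/2) * (π / Real.cos (k * π / 2))
      = c2 k * Real.Gamma ((k+1)/2) := by
  have hcos : 0 < Real.cos (k * π / 2) := by
    apply Real.cos_pos_of_mem_Ioo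
    constructor
    · nlinarith [Real.pi_pos]
    · nlinarith [Real.pi_pos]
  have hΓk : 0 < Real.Gamma k := Real.Gamma_pos_of_pos hk0
  have hΓk2 : 0 < Real.Gamma (k/2) := Real.Gamma_pos_of_pos (by linarith)
  have hsqrtpi : 0 < Real.sqrt π := Real.sqrt_pos.mpr Real.pi_pos
  have hpi : Real.sqrt π * Real.sqrt π = π := Real.mul_self_sqrt Real.pi_pos.le
  have hdup := Real.Gamma_mul_Gamma_add_half (k/2)
  rw [show k/2 + 1/2 = (k+1)/2 by ring, show 2*(k/2) = k by ring] at hdup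
  have h2pow : (2:ℝ)^((1-k)/2) * (2:ℝ)^((1-k)/2) = (2:ℝ)^(1-k) := by
    rw [← Real.rpow_add (by norm_num : (0:ℝ) < 2)]
    congr 1
    ring
  have h2p : (0:ℝ) < (2:ℝ)^((1-k)/2) := Real.rpow_pos_of_pos (by norm_num) _
  rw [c1, c2]
  field_simp
  linear_combination (Real.Gamma k*π) * h2pow
    - (Real.sqrt π) * hdup
    - (Real.Gamma k*(2:ℝ)^(1-k)) * hpi


end Lemma1Aux

open Lemma1Aux in
theorem lemma1_representation (k : ℝ) (hk0 : 0 < k) (hk1 : k < 1) (u : ℝ) (hu : 0 < u) :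
    c1 k * besselK ((k-1)/2) u * u ^ ((k-1)/2)
      = c2 k * (1 - theta k u) * u ^ (k-1) := by
  have hx4 : (0:ℝ) ≤ u^2/4 := by positivity
  have hμ0 : (0:ℝ) < (1-k)/2 := by linarith
  have hμ1 : (1-k)/2 < 1 := by linarith
  have hq : (0:ℝ) < u/2 := by positivity
  -- Bessel side
  have hB : besselK ((k-1)/2) u = (1/2) * (u/2) ^ ((k-1)/2) * G ((1-k)/2) (u^2/4) := by
    rw [besselK_F hu, show -((k-1)/2) = (1-k)/2 by ring, F_eq_G hμ0 hμ1 hx4]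
  have hGx : G ((1-k)/2) (u^2/4) = (π / Real.sin (π * ((1-k)/2)))
      * (T ((k-1)/2) (u^2/4) - (u/2)^(1-k) * T ((1-k)/2) (u^2/4)) := by
    rw [G, max_eq_left hx4, show -((1-k)/2) = (k-1)/2 by ring]
    have hxpow : (u^2/4) ^ ((1-k)/2) = (u/2)^(1-k) := by
      rw [show u^2/4 = (u/2)^2 by ring, ← Real.rpow_natCast (u/2) 2,
        ← Real.rpow_mul hq.le]
      congr 1
      push_cast
      ring
    rw [hxpow]
  have hsin : Real.sin (π * ((1-k)/2)) = Real.cos (k * π / 2) := by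
    rw [show π * ((1-k)/2) = π/2 - k*π/2 by ring, Real.sin_pi_div_two_sub]
  -- power juggling
  have hupow : (u/2) ^ ((k-1)/2) * u ^ ((k-1)/2) = u^(k-1) * (2:ℝ)^((1-k)/2) := by
    have e1 : (u/2) ^ ((k-1)/2) * u ^ ((k-1)/2) = (u^2/2) ^ ((k-1)/2) := by
      rw [← Real.mul_rpow hq.le hu.le]
      congr 1
      ring
    have e2 : ((u^2/2 : ℝ)) ^ ((k-1)/2) = (u^2 : ℝ)^((k-1)/2) / (2:ℝ)^((k-1)/2) := by
      rw [Real.div_rpow (by positivity : (0:ℝ) ≤ u^2) (by norm_num : (0:ℝ) ≤ 2)]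
    have e3 : ((u^2 : ℝ))^((k-1)/2) = u^(k-1) := by
      rw [← Real.rpow_natCast u 2, ← Real.rpow_mul hu.le]
      congr 1
      push_cast
      ring
    have e4 : (1:ℝ) / (2:ℝ)^((k-1)/2) = (2:ℝ)^((1-k)/2) := by
      rw [one_div, ← Real.rpow_neg (by norm_num : (0:ℝ) ≤ 2)]
      congr 1
      ring
    rw [e1, e2, e3, div_eq_mul_one_div, e4]
  rw [hB, hGx, hsin, one_sub_theta hk0 hk1 hu]
  have := scalar_identity hk0 hk1
  set B : ℝ := T ((k-1)/2) (u^2/4) - (u/2)^(1-k) * T ((1-k)/2) (u^2/4) with hBdef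
  calc c1 k * (1/2 * (u/2) ^ ((k-1)/2) * (π / Real.cos (k*π/2) * B)) * u ^ ((k-1)/2)
      = (c1 k * (1/2) * (2:ℝ)^((1-k)/2) * (π / Real.cos (k * π / 2)))
        * (u^(k-1) * B) := by
        rw [show c1 k * (1/2 * (u/2) ^ ((k-1)/2) * (π / Real.cos (k*π/2) * B)) * u ^ ((k-1)/2)
          = c1 k * (1/2) * ((u/2) ^ ((k-1)/2) * u ^ ((k-1)/2)) * (π / Real.cos (k*π/2)) * B
          from by ring, hupow]
        ring
    _ = c2 k * (Real.Gamma ((k+1)/2) * B) * u^(k-1) := by rw [this]; ring
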